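/- Let G be a group, c ∈ G of infinite order, and suppose every element of infinite order in G lies in ⟨c⟩. If a ∈ G has finite order n ≥ 2 and a c a⁻¹ ∈ ⟨c⟩ with a c a⁻¹ = cⁱ, then i = ±1, and i = 1 is impossible; hence a c a⁻¹ = c⁻¹. -/

import Mathlib

theorem conj_eq_inv_of_finite_order {G : Type*} [Group G]
    (c : G) (hc : ¬ IsOfFinOrder c)
    (hall : ∀ g : G, ¬ IsOfFinOrder g → g ∈ Subgroup.zpowers c)
    (a : G) (n : ℕ) (hn : orderOf a = n) (hn2 : 2 ≤ n)
    (i : ℤ) (hi : a * c * a⁻¹ = c ^ i) :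
    i = -1 ∧ a * c * a⁻¹ = c⁻¹ := by
  have hinj : Function.Injective (fun k : ℤ => c ^ k) :=
    injective_zpow_iff_not_isOfFinOrder.mpr hc
  have hfina : IsOfFinOrder a := by
    rw [← orderOf_pos_iff, hn]; omega
  -- c^j has infinite order unless j = 0
  have hpow : ∀ j : ℤ, j ≠ 0 → ¬ IsOfFinOrder (c ^ j) := by
    intro j hj hfin
    obtain ⟨m, hm, hme⟩ := hfin.exists_pow_eq_one
    have : c ^ (j * (m : ℤ)) = c ^ (0 : ℤ) := by
      rw [zpow_mul, zpow_zero]; exact_mod_cast hme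
    have := hinj this
    exact absurd this (by positivity)
  -- iterated conjugation
  have key : ∀ k : ℕ, a ^ k * c * (a ^ k)⁻¹ = c ^ (i ^ k) := by
    intro k
    induction k with
    | zero => simp
    | succ k ih =>
      have : a * (a ^ k * c * (a ^ k)⁻¹) * a⁻¹ = a * c ^ (i ^ k) * a⁻¹ := by rw [ih]
      calc a ^ (k+1) * c * (a ^ (k+1))⁻¹
          = a * (a ^ k * c * (a ^ k)⁻¹) * a⁻¹ := by
            rw [pow_succ']; group
        _ = a * c ^ (i ^ k) * a⁻¹ := this
        _ = (a * c * a⁻¹) ^ (i ^ k) := by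
            rw [conj_zpow]
        _ = c ^ (i ^ (k+1)) := by rw [hi, ← zpow_mul, pow_succ, mul_comm]
  have han : a ^ n = 1 := by rw [← hn]; exact pow_orderOf_eq_one a
  have hin : i ^ n = 1 := by
    have := key n
    rw [han] at this
    simp only [one_mul, inv_one, mul_one] at this
    exact hinj (show c ^ (i ^ n) = c ^ (1 : ℤ) by simpa using this.symm)
  have hunit : IsUnit i := by
    exact IsUnit.of_mul_eq_one (a := i) (i ^ (n - 1)) (by
      rw [← pow_succ']; rwa [show n - 1 + 1 = n by omega])
  have hi1 : i = 1 ∨ i = -1 := Int.isUnit_iff.mp hunit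
  have : i = -1 := by
    rcases hi1 with h1 | h1
    · exfalso
      -- i = 1 means a commutes with c
      rw [h1] at hi
      have hcomm : a * c = c * a := by
        have h := hi
        simp only [zpow_one] at h
        exact mul_inv_eq_iff_eq_mul.mp h
      -- a * c has infinite order
      have hac : ¬ IsOfFinOrder (a * c) := by
        intro hfin
        apply hc
        have hcac : Commute a c := hcomm
        have h2 : Commute a⁻¹ (a * c) := ((Commute.refl a).mul_right hcac).inv_left
        have := (h2.isOfFinOrder_mul hfina.inv hfin)
        simpa using this
      obtain ⟨k, hk⟩ := hall _ hac
      -- a = c ^ (k - 1)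
      have hk' : c ^ k = a * c := hk
      have ha : a = c ^ (k - 1) := by
        rw [zpow_sub, zpow_one, hk']; group
      have hk1 : k - 1 = 0 := by
        by_contra hne
        exact hpow _ hne (ha ▸ hfina)
      rw [hk1, zpow_zero] at ha
      have : orderOf a = 1 := by rw [ha, orderOf_one]
      omega
    · exact h1
  exact ⟨this, by rw [hi, this, zpow_neg_one]⟩
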